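/- Fix reals Ξ > 1, c > -1, Z > 0, ν, λ, and a continuous function ρ : [1,Ξ] → ℝ. Define W(X) := √(X+c)/√Z − ν + (1/2)·∫₁^Ξ ρ(T) dT /((√(X+c)+√(T+c))·√(T+c)), G₂(X|Y) := 4λ²/(√(X+c)·√(Y+c)·(√(X+c)+√(Y+c))²), and for X ≠ Y set G₃(X,Y) := 8λ·(∂/∂Y)[(W(X)−W(Y))/(X−Y)]. Then for all X, Y ≥ 1 with X ≠ Y: (W(X)+ν)·G₂(X|Y) = −λ·G₃(X,Y) − (1/2)·∫₁^Ξ ρ(T)·(G₂(X|Y)−G₂(T|Y))/(X−T) dT, where the integrand is extended continuously to T = X. -/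

import Mathlib

open MeasureTheory

set_option maxHeartbeats 1000000 in
/-- Schwinger–Dyson integral equation for the `(1+1)`-point function:
with `W` the ansatz, `G₂(X|Y) = 4λ²/(√(X+c)√(Y+c)(√(X+c)+√(Y+c))²)` and
`G₃(X,Y) = 8λ·∂_Y[(W(X)−W(Y))/(X−Y)]`, one has for `X ≠ Y` in `[1,∞)`:
`(W(X)+ν)·G₂(X|Y) = −λ·G₃(X,Y) − (1/2)∫₁^Ξ ρ(T)(G₂(X|Y)−G₂(T|Y))/(X−T) dT`,
the integrand being extended continuously to `T = X`. -/
theorem stmt_7 (Ξ c Z ν lam : ℝ) (hΞ : 1 < Ξ) (hc : -1 < c) (hZ : 0 < Z)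
    (ρ : ℝ → ℝ) (hρ : ContinuousOn ρ (Set.Icc 1 Ξ))
    (W : ℝ → ℝ)
    (hW : ∀ X, W X = Real.sqrt (X + c) / Real.sqrt Z - ν +
      (1 / 2) * ∫ T in (1 : ℝ)..Ξ,
        ρ T / ((Real.sqrt (X + c) + Real.sqrt (T + c)) * Real.sqrt (T + c)))
    (G₂ : ℝ → ℝ → ℝ)
    (hG₂ : ∀ U V, G₂ U V = 4 * lam ^ 2 /
      (Real.sqrt (U + c) * Real.sqrt (V + c) * (Real.sqrt (U + c) + Real.sqrt (V + c)) ^ 2))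
    (G₃ : ℝ → ℝ → ℝ)
    (hG₃ : ∀ X Y, X ≠ Y →
      G₃ X Y = 8 * lam * deriv (fun Y' => (W X - W Y') / (X - Y')) Y) :
    ∀ X Y, 1 ≤ X → 1 ≤ Y → X ≠ Y →
      ∃ F : ℝ → ℝ, ContinuousOn F (Set.Icc 1 Ξ) ∧
        (∀ T ∈ Set.Icc 1 Ξ, T ≠ X → F T = ρ T * (G₂ X Y - G₂ T Y) / (X - T)) ∧
        (W X + ν) * G₂ X Y = -lam * G₃ X Y - (1 / 2) * ∫ T in (1 : ℝ)..Ξ, F T := by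
  intro X Y hX hY hXY
  have hXc : (0:ℝ) < X + c := by linarith
  have hYc : (0:ℝ) < Y + c := by linarith
  set a := Real.sqrt (X + c) with ha_def
  set b := Real.sqrt (Y + c) with hb_def
  have ha : 0 < a := Real.sqrt_pos.2 hXc
  have hb : 0 < b := Real.sqrt_pos.2 hYc
  have ha2 : a ^ 2 = X + c := Real.sq_sqrt hXc.le
  have hb2 : b ^ 2 = Y + c := Real.sq_sqrt hYc.le
  clear_value a b
  have hsZ : 0 < Real.sqrt Z := Real.sqrt_pos.2 hZ
  have hs : ∀ T : ℝ, 1 ≤ T → 0 < Real.sqrt (T + c) := fun T hT =>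
    Real.sqrt_pos.2 (by linarith)
  have hscont : Continuous (fun T : ℝ => Real.sqrt (T + c)) := by fun_prop
  have key_int : ∀ q : ℝ → ℝ, ContinuousOn q (Set.Icc 1 Ξ) →
      IntervalIntegrable q volume 1 Ξ := fun q hq =>
    ContinuousOn.intervalIntegrable (by rwa [Set.uIcc_of_le hΞ.le])
  have hmeas : ∀ q : ℝ → ℝ, ContinuousOn q (Set.Icc 1 Ξ) →
      AEStronglyMeasurable q (volume.restrict (Set.uIoc 1 Ξ)) := fun q hq =>
    (hq.aestronglyMeasurable measurableSet_Icc).mono_measure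
      (Measure.restrict_mono (by rw [Set.uIoc_of_le hΞ.le]; exact Set.Ioc_subset_Icc_self) le_rfl)
  have hfrac : ∀ d : ℝ → ℝ, Continuous d → (∀ T ∈ Set.Icc 1 Ξ, d T ≠ 0) →
      ContinuousOn (fun T => ρ T / d T) (Set.Icc 1 Ξ) := fun d hd hne =>
    hρ.div hd.continuousOn hne
  -- the function J
  set J : ℝ → ℝ := fun y => ∫ T in (1:ℝ)..Ξ,
    ρ T / ((a + Real.sqrt (T + c)) * (y + Real.sqrt (T + c)) * Real.sqrt (T + c)) with hJ_def
  set B : ℝ := ∫ T in (1:ℝ)..Ξ,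
    ρ T / ((a + Real.sqrt (T + c)) * (b + Real.sqrt (T + c))^2 * Real.sqrt (T + c)) with hB_def
  set A : ℝ := ∫ T in (1:ℝ)..Ξ,
    ρ T / ((a + Real.sqrt (T + c)) * Real.sqrt (T + c)) with hA_def
  clear_value J B A
  -- derivative of J at b
  have hJder : HasDerivAt J (-B) b := by
    rw [hJ_def, hB_def]
    have main := (intervalIntegral.hasDerivAt_integral_of_dominated_loc_of_deriv_le (F := fun y T =>
        ρ T / ((a + Real.sqrt (T + c)) * (y + Real.sqrt (T + c)) * Real.sqrt (T + c)))
      (F' := fun y T => -(ρ T / ((a + Real.sqrt (T + c)) * (y + Real.sqrt (T + c))^2 * Real.sqrt (T + c))))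
      (bound := fun T => |ρ T| / ((a + Real.sqrt (T + c)) * (b/2 + Real.sqrt (T + c))^2 * Real.sqrt (T + c)))
      (x₀ := b) (a := 1) (b := Ξ) (μ := volume) (Metric.ball_mem_nhds b (half_pos hb)) ?_ ?_ ?_ ?_ ?_ ?_).2
    · rw [intervalIntegral.integral_neg] at main
      exact main
    · filter_upwards [Metric.ball_mem_nhds b (half_pos hb)] with y hy
      rw [Metric.mem_ball, Real.dist_eq] at hy
      have hy2 : b/2 < y := by have := abs_lt.1 hy; linarith [this.1]
      refine hmeas _ (hfrac _ (by fun_prop) ?_)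
      intro T hT
      have h1 := hs T hT.1
      exact ne_of_gt (mul_pos (mul_pos (by linarith) (by linarith)) h1)
    · refine key_int _ (hfrac _ (by fun_prop) ?_)
      intro T hT
      have h1 := hs T hT.1
      have h2 : (0:ℝ) < b + Real.sqrt (T + c) := by linarith
      exact ne_of_gt (mul_pos (mul_pos (by linarith) h2) h1)
    · refine (hmeas _ ?_).neg
      refine hfrac _ (by fun_prop) ?_
      intro T hT
      have h1 := hs T hT.1
      have h2 : (0:ℝ) < b + Real.sqrt (T + c) := by linarith
      exact ne_of_gt (mul_pos (mul_pos (by linarith) (by positivity)) h1)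
    · refine ae_of_all _ fun T hT y hy => ?_
      rw [Set.uIoc_of_le hΞ.le] at hT
      have hT' : T ∈ Set.Icc 1 Ξ := ⟨hT.1.le, hT.2⟩
      have h1 := hs T hT'.1
      rw [Metric.mem_ball, Real.dist_eq] at hy
      have hy2 : b/2 < y := by have := abs_lt.1 hy; linarith [this.1]
      set S := Real.sqrt (T + c)
      have hpos1 : (0:ℝ) < (a + S) * (y + S)^2 * S := by
        apply mul_pos (mul_pos (by linarith) _) h1
        have : (0:ℝ) < y + S := by linarith
        positivity
      have hpos2 : (0:ℝ) < (a + S) * (b/2 + S)^2 * S := by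
        apply mul_pos (mul_pos (by linarith) _) h1
        have : (0:ℝ) < b/2 + S := by linarith
        positivity
      rw [norm_neg, Real.norm_eq_abs, abs_div, abs_of_pos hpos1]
      have hsq : (b/2 + S)^2 ≤ (y + S)^2 := by nlinarith
      have hle : (a + S) * (b/2 + S)^2 * S ≤ (a + S) * (y + S)^2 * S :=
        mul_le_mul_of_nonneg_right (mul_le_mul_of_nonneg_left hsq (by linarith)) h1.le
      exact div_le_div_of_nonneg_left (abs_nonneg _) hpos2 hle
    · refine key_int _ ?_
      refine ContinuousOn.div (continuous_abs.comp_continuousOn hρ)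
        (Continuous.continuousOn (by fun_prop)) ?_
      intro T hT
      have h1 := hs T hT.1
      have h2 : (0:ℝ) < b/2 + Real.sqrt (T + c) := by linarith
      exact ne_of_gt (mul_pos (mul_pos (by linarith) (by positivity)) h1)
    · refine ae_of_all _ fun T hT y hy => ?_
      rw [Set.uIoc_of_le hΞ.le] at hT
      have hT' : T ∈ Set.Icc 1 Ξ := ⟨hT.1.le, hT.2⟩
      have h1 := hs T hT'.1
      rw [Metric.mem_ball, Real.dist_eq] at hy
      have hy2 : b/2 < y := by have := abs_lt.1 hy; linarith [this.1]
      set S := Real.sqrt (T + c)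
      have hg : HasDerivAt (fun y : ℝ => (a + S) * (y + S) * S) ((a + S) * 1 * S) y :=
        (((hasDerivAt_id y).add_const S).const_mul (a + S)).mul_const S
      have hne1 : a + S ≠ 0 := by positivity
      have hne2 : y + S ≠ 0 := by linarith
      have hne3 : S ≠ 0 := ne_of_gt h1
      have hgne : (a + S) * (y + S) * S ≠ 0 :=
        ne_of_gt (mul_pos (mul_pos (by linarith) (by linarith)) h1)
      have : HasDerivAt (fun y => ρ T / ((a + S) * (y + S) * S)) _ y :=
        (hasDerivAt_const y (ρ T)).div hg hgne
      refine this.congr_deriv ?_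
      field_simp
      ring
  -- the derivative of sqrt(Y'+c) at Y
  have hsqrtY : HasDerivAt (fun Y' : ℝ => Real.sqrt (Y' + c)) (1/(2*b)) Y := by
    have h0 := (Real.hasDerivAt_sqrt (ne_of_gt hYc)).comp Y ((hasDerivAt_id Y).add_const c)
    simpa [← hb_def, Function.comp_def] using h0
  -- derivative of h at b
  have hh : HasDerivAt (fun y => (Real.sqrt Z * (a + y))⁻¹ - (1/2) * (a + y)⁻¹ * J y)
      (-(Real.sqrt Z * 1)/(Real.sqrt Z * (a + b))^2 -
        ((1/2) * (-1/(a+b)^2) * J b + ((1/2) * (a+b)⁻¹) * (-B))) (Real.sqrt (Y + c)) := by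
    rw [← hb_def]
    have h1 : HasDerivAt (fun y : ℝ => Real.sqrt Z * (a + y)) (Real.sqrt Z * 1) b :=
      ((hasDerivAt_id b).const_add a).const_mul (Real.sqrt Z)
    have h1inv := h1.inv (ne_of_gt (mul_pos hsZ (by linarith)))
    have h2 : HasDerivAt (fun y : ℝ => (a + y)⁻¹) (-1/(a+b)^2) b := by
      have := ((hasDerivAt_id b).const_add a).inv (by positivity : a + b ≠ 0)
      simpa [Pi.inv_def] using this
    exact h1inv.sub ((h2.const_mul (1/2 : ℝ)).mul hJder)
  have hg : HasDerivAt (fun Y' => (Real.sqrt Z * (a + Real.sqrt (Y' + c)))⁻¹ -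
        (1/2) * (a + Real.sqrt (Y' + c))⁻¹ * J (Real.sqrt (Y' + c)))
      ((-(Real.sqrt Z * 1)/(Real.sqrt Z * (a + b))^2 -
        ((1/2) * (-1/(a+b)^2) * J b + ((1/2) * (a+b)⁻¹) * (-B))) * (1/(2*b))) Y :=
    by have := HasDerivAt.comp Y hh hsqrtY; exact this
  -- eventual equality of the difference quotient with the closed form
  have hfg : (fun Y' => (W X - W Y') / (X - Y')) =ᶠ[nhds Y]
      (fun Y' => (Real.sqrt Z * (a + Real.sqrt (Y' + c)))⁻¹ -
        (1/2) * (a + Real.sqrt (Y' + c))⁻¹ * J (Real.sqrt (Y' + c))) := by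
    have h1 : ∀ᶠ Y' in nhds Y, -c < Y' := eventually_gt_nhds (by linarith)
    have h2 : ∀ᶠ Y' in nhds Y, Y' ≠ X := eventually_ne_nhds hXY.symm
    filter_upwards [h1, h2] with Y' hY1 hY2
    have hY'c : 0 < Y' + c := by linarith
    set b' := Real.sqrt (Y' + c) with hb'_def
    have hb' : 0 < b' := Real.sqrt_pos.2 hY'c
    have hb'2 : b' ^ 2 = Y' + c := Real.sq_sqrt hY'c.le
    clear_value b'
    have hXY' : X - Y' = a^2 - b'^2 := by rw [ha2, hb'2]; ring
    have hab' : a ≠ b' := by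
      intro h
      apply hY2
      have : Y' + c = X + c := by rw [← hb'2, ← h, ha2]
      linarith
    have hsub : (∫ T in (1:ℝ)..Ξ, ρ T / ((a + Real.sqrt (T+c)) * Real.sqrt (T+c))) -
        (∫ T in (1:ℝ)..Ξ, ρ T / ((b' + Real.sqrt (T+c)) * Real.sqrt (T+c))) =
        (b' - a) * J b' := by
      have hi1 : IntervalIntegrable (fun T => ρ T / ((a + Real.sqrt (T+c)) * Real.sqrt (T+c)))
          volume 1 Ξ := by
        refine key_int _ (hfrac _ (by fun_prop) ?_)
        intro T hT
        have h1 := hs T hT.1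
        exact ne_of_gt (mul_pos (by linarith) h1)
      have hi2 : IntervalIntegrable (fun T => ρ T / ((b' + Real.sqrt (T+c)) * Real.sqrt (T+c)))
          volume 1 Ξ := by
        refine key_int _ (hfrac _ (by fun_prop) ?_)
        intro T hT
        have h1 := hs T hT.1
        exact ne_of_gt (mul_pos (by linarith) h1)
      rw [← intervalIntegral.integral_sub hi1 hi2, hJ_def]
      simp only [← intervalIntegral.integral_const_mul]
      apply intervalIntegral.integral_congr
      intro T hT
      rw [Set.uIcc_of_le hΞ.le] at hT
      have h1 := hs T hT.1
      have hne1 : a + Real.sqrt (T+c) ≠ 0 := ne_of_gt (by linarith)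
      have hne2 : b' + Real.sqrt (T+c) ≠ 0 := ne_of_gt (by linarith)
      have hne3 : Real.sqrt (T+c) ≠ 0 := ne_of_gt h1
      field_simp
      ring
    have e1 : W X - W Y' = (a - b')/Real.sqrt Z + (1/2) * ((b' - a) * J b') := by
      rw [hW X, hW Y', ← ha_def, ← hb'_def, sub_div]
      linarith [hsub]
    rw [e1, hXY']
    have hne : a^2 - b'^2 ≠ 0 := by
      intro h
      have h2 : (a - b') * (a + b') = 0 := by linear_combination h
      rcases mul_eq_zero.1 h2 with h3 | h3
      · exact hab' (by linarith)
      · linarith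
    have hab : a + b' ≠ 0 := ne_of_gt (by linarith)
    field_simp
    ring
  have hderiv : deriv (fun Y' => (W X - W Y') / (X - Y')) Y =
      (-(Real.sqrt Z * 1)/(Real.sqrt Z * (a + b))^2 -
        ((1/2) * (-1/(a+b)^2) * J b + ((1/2) * (a+b)⁻¹) * (-B))) * (1/(2*b)) := by
    rw [hfg.deriv_eq]
    exact hg.deriv
  -- the continuous extension F
  set Fc : ℝ → ℝ := fun T => -(4*lam^2) * ρ T *
      ((Real.sqrt (T+c))^2 + Real.sqrt (T+c) * a + a^2 + 2*b*(Real.sqrt (T+c) + a) + b^2) /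
      (b * a * Real.sqrt (T+c) * (a+b)^2 * (Real.sqrt (T+c) + b)^2 * (a + Real.sqrt (T+c)))
    with hFc_def
  clear_value Fc
  have hden_pos : ∀ T ∈ Set.Icc (1:ℝ) Ξ,
      0 < b * a * Real.sqrt (T+c) * (a+b)^2 * (Real.sqrt (T+c) + b)^2 * (a + Real.sqrt (T+c)) := by
    intro T hT
    have h1 := hs T hT.1
    have h2 : (0:ℝ) < a + b := by linarith
    have h3 : (0:ℝ) < Real.sqrt (T+c) + b := by linarith
    have h4 : (0:ℝ) < a + Real.sqrt (T+c) := by linarith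
    positivity
  have hFc_cont : ContinuousOn Fc (Set.Icc 1 Ξ) := by
    rw [hFc_def]
    refine ContinuousOn.div ?_ (Continuous.continuousOn (by fun_prop)) ?_
    · exact (continuousOn_const.mul hρ).mul (Continuous.continuousOn (by fun_prop))
    · exact fun T hT => ne_of_gt (hden_pos T hT)
  refine ⟨Fc, hFc_cont, ?_, ?_⟩
  · -- F agrees with the prescribed formula away from T = X
    intro T hT hTX
    have h1 := hs T hT.1
    have hS2 : (Real.sqrt (T+c))^2 = T + c := Real.sq_sqrt (by linarith [hT.1])
    have hXT : X - T = a^2 - (Real.sqrt (T+c))^2 := by rw [ha2, hS2]; ring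
    rw [hG₂, hG₂, ← ha_def, ← hb_def, hXT, hFc_def]
    have hne0 : a^2 - (Real.sqrt (T+c))^2 ≠ 0 := hXT ▸ sub_ne_zero.2 (Ne.symm hTX)
    have hne1 : a + b ≠ 0 := ne_of_gt (by linarith)
    have hne2 : Real.sqrt (T+c) + b ≠ 0 := ne_of_gt (by linarith)
    have hne3 : a + Real.sqrt (T+c) ≠ 0 := ne_of_gt (by linarith)
    have hne4 : Real.sqrt (T+c) ≠ 0 := ne_of_gt h1
    field_simp
    ring
  · -- the Schwinger–Dyson equation
    have hWX : W X + ν = a / Real.sqrt Z + (1/2) * A := by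
      rw [hW X, ← ha_def, ← hA_def]
      ring
    have hG2XY : G₂ X Y = 4*lam^2/(a*b*(a+b)^2) := by
      rw [hG₂, ← ha_def, ← hb_def]
    have hG3XY : G₃ X Y = 8 * lam *
        ((-(Real.sqrt Z * 1)/(Real.sqrt Z * (a + b))^2 -
          ((1/2) * (-1/(a+b)^2) * J b + ((1/2) * (a+b)⁻¹) * (-B))) * (1/(2*b))) := by
      rw [hG₃ X Y hXY, hderiv]
    -- integrability of the pieces
    have hi1 : IntervalIntegrable (fun T => ρ T / ((a + Real.sqrt (T+c)) * Real.sqrt (T+c)))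
        volume 1 Ξ := by
      refine key_int _ (hfrac _ (by fun_prop) ?_)
      intro T hT
      have h1 := hs T hT.1
      exact ne_of_gt (mul_pos (by linarith) h1)
    have hi2 : IntervalIntegrable
        (fun T => ρ T / ((a + Real.sqrt (T+c)) * (b + Real.sqrt (T+c)) * Real.sqrt (T+c)))
        volume 1 Ξ := by
      refine key_int _ (hfrac _ (by fun_prop) ?_)
      intro T hT
      have h1 := hs T hT.1
      have h2 : (0:ℝ) < b + Real.sqrt (T+c) := by linarith
      exact ne_of_gt (mul_pos (mul_pos (by linarith) h2) h1)
    have hi3 : IntervalIntegrable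
        (fun T => ρ T / ((a + Real.sqrt (T+c)) * (b + Real.sqrt (T+c))^2 * Real.sqrt (T+c)))
        volume 1 Ξ := by
      refine key_int _ (hfrac _ (by fun_prop) ?_)
      intro T hT
      have h1 := hs T hT.1
      have h2 : (0:ℝ) < b + Real.sqrt (T+c) := by linarith
      exact ne_of_gt (mul_pos (mul_pos (by linarith) (by positivity)) h1)
    have hiF : IntervalIntegrable Fc volume 1 Ξ := key_int _ hFc_cont
    -- the combined integrand vanishes identically
    have hzero : (2*lam^2/(a*b*(a+b)^2)) * A + (2*lam^2/(b*(a+b)^2)) * J b +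
        (2*lam^2/(b*(a+b))) * B + (1/2) * (∫ T in (1:ℝ)..Ξ, Fc T) = 0 := by
      have hsplit : ∫ T in (1:ℝ)..Ξ,
          ((2*lam^2/(a*b*(a+b)^2)) * (ρ T / ((a + Real.sqrt (T+c)) * Real.sqrt (T+c))) +
           (2*lam^2/(b*(a+b)^2)) * (ρ T / ((a + Real.sqrt (T+c)) * (b + Real.sqrt (T+c)) * Real.sqrt (T+c))) +
           (2*lam^2/(b*(a+b))) * (ρ T / ((a + Real.sqrt (T+c)) * (b + Real.sqrt (T+c))^2 * Real.sqrt (T+c))) +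
           (1/2) * Fc T) =
          (2*lam^2/(a*b*(a+b)^2)) * A + (2*lam^2/(b*(a+b)^2)) * J b +
          (2*lam^2/(b*(a+b))) * B + (1/2) * (∫ T in (1:ℝ)..Ξ, Fc T) := by
        rw [intervalIntegral.integral_add (((hi1.const_mul _).add (hi2.const_mul _)).add
            (hi3.const_mul _)) (hiF.const_mul _),
          intervalIntegral.integral_add ((hi1.const_mul _).add (hi2.const_mul _)) (hi3.const_mul _),
          intervalIntegral.integral_add (hi1.const_mul _) (hi2.const_mul _),
          intervalIntegral.integral_const_mul, intervalIntegral.integral_const_mul,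
          intervalIntegral.integral_const_mul, intervalIntegral.integral_const_mul]
        rw [hA_def, hB_def, hJ_def]
      have hvanish : ∫ T in (1:ℝ)..Ξ,
          ((2*lam^2/(a*b*(a+b)^2)) * (ρ T / ((a + Real.sqrt (T+c)) * Real.sqrt (T+c))) +
           (2*lam^2/(b*(a+b)^2)) * (ρ T / ((a + Real.sqrt (T+c)) * (b + Real.sqrt (T+c)) * Real.sqrt (T+c))) +
           (2*lam^2/(b*(a+b))) * (ρ T / ((a + Real.sqrt (T+c)) * (b + Real.sqrt (T+c))^2 * Real.sqrt (T+c))) +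
           (1/2) * Fc T) = 0 := by
        rw [intervalIntegral.integral_congr (g := fun _ => (0:ℝ))]
        · simp
        · intro T hT
          rw [Set.uIcc_of_le hΞ.le] at hT
          have h1 := hs T hT.1
          have hne1 : a + b ≠ 0 := ne_of_gt (by linarith)
          have hne2 : Real.sqrt (T+c) + b ≠ 0 := ne_of_gt (by linarith)
          have hne2' : b + Real.sqrt (T+c) ≠ 0 := ne_of_gt (by linarith)
          have hne3 : a + Real.sqrt (T+c) ≠ 0 := ne_of_gt (by linarith)
          have hne4 : Real.sqrt (T+c) ≠ 0 := ne_of_gt h1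
          rw [hFc_def]
          field_simp
          ring
      linarith [hsplit, hvanish]
    rw [hWX, hG2XY, hG3XY]
    have hIF : (∫ T in (1:ℝ)..Ξ, Fc T) =
        -2 * ((2*lam^2/(a*b*(a+b)^2)) * A + (2*lam^2/(b*(a+b)^2)) * J b +
          (2*lam^2/(b*(a+b))) * B) := by linarith
    rw [hIF]
    have hne1 : a + b ≠ 0 := ne_of_gt (by linarith)
    have hneZ : Real.sqrt Z ≠ 0 := ne_of_gt hsZ
    field_simp
    ring
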